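/- Let n ≥ 2 and r ≥ 1 be integers. Let X be the set of pairs (λ, a) where λ : ZMod r → ℕ satisfies Σ_{i ∈ ZMod r} λ(i) = n, a ∈ ZMod (n·r), and the image of a under the natural projection ZMod(n·r) → ZMod r equals the weight w(λ) := Σ_{i ∈ ZMod r} i·λ(i) computed in ZMod r. Let the group ZMod r act on X by m·(λ, a) = (σ^m λ, a + m·n), where (σ^m λ)(i) = λ(i − m) is the cyclic shift and m·n is computed in ZMod(n·r) via any integer lift of m (well defined since r·n ≡ 0 in ZMod(n·r)). Then this action is free, and the number of orbits equals the binomial coefficient C(n + r − 1, n − 1). -/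

import Mathlib

/-- The defining condition for the parameter set `X` of simple modules of the rational
subregular W-algebra `W_sb(n,r)`: a pair `(λ, a)` with `λ : ZMod r → ℕ` of total sum `n`
and `a : ZMod (n·r)` whose reduction mod `r` equals the weight `Σ i·λ(i) ∈ ZMod r`. -/
def subregCond (n r : ℕ) (p : (ZMod r → ℕ) × ZMod (n * r)) : Prop :=
  (∑ i ∈ Finset.range r, p.1 (i : ZMod r)) = n ∧
  ZMod.castHom (dvd_mul_left r n) (ZMod r) p.2 =
    ∑ i ∈ Finset.range r, (i : ZMod r) * (p.1 (i : ZMod r) : ZMod r)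

/-- The `ZMod r`-action: `m · (λ, a) = (σ^m λ, a + m·n)`, where `(σ^m λ)(i) = λ(i − m)`
and `m·n` is computed in `ZMod (n·r)` via the integer lift `m.val`. -/
def subregAct (n r : ℕ) (m : ZMod r) (p : (ZMod r → ℕ) × ZMod (n * r)) :
    (ZMod r → ℕ) × ZMod (n * r) :=
  (fun i => p.1 (i - m), p.2 + (m.val : ZMod (n * r)) * (n : ZMod (n * r)))

namespace SubregAux

variable {n r : ℕ}

lemma val_cast_self (hr : r ≠ 0) (m : ZMod r) : ((m.val : ℕ) : ZMod r) = m := by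
  haveI : NeZero r := ⟨hr⟩
  rw [ZMod.natCast_val, ZMod.cast_id]

lemma cast_mul_n (hn : n ≠ 0) {a b : ℕ} (h : a ≡ b [MOD r]) :
    ((a * n : ℕ) : ZMod (n * r)) = ((b * n : ℕ) : ZMod (n * r)) := by
  rw [ZMod.natCast_eq_natCast_iff]
  simpa [Nat.mul_comm] using h.mul_right' n

lemma m_eq_zero (hn : n ≠ 0) (hr : r ≠ 0) {m : ZMod r}
    (h : ((m.val : ℕ) : ZMod (n * r)) * ((n : ℕ) : ZMod (n * r)) = 0) : m = 0 := by
  haveI : NeZero r := ⟨hr⟩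
  rw [← Nat.cast_mul, ZMod.natCast_eq_zero_iff] at h
  rw [Nat.mul_comm m.val n] at h
  have hd : r ∣ m.val := (Nat.mul_dvd_mul_iff_left (Nat.pos_of_ne_zero hn)).mp h
  have h0 : m.val = 0 := Nat.eq_zero_of_dvd_of_lt hd m.val_lt
  exact (ZMod.val_eq_zero m).mp h0

lemma act_act (hn : n ≠ 0) (hr : r ≠ 0) (m m' : ZMod r)
    (p : (ZMod r → ℕ) × ZMod (n * r)) :
    subregAct n r m (subregAct n r m' p) = subregAct n r (m + m') p := by
  haveI : NeZero r := ⟨hr⟩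
  unfold subregAct
  refine Prod.ext (funext fun i => ?_) ?_
  · simp only; rw [sub_sub]
  · simp only
    rw [add_assoc]
    congr 1
    rw [← Nat.cast_mul, ← Nat.cast_mul, ← Nat.cast_add, ← Nat.add_mul, ← Nat.cast_mul]
    apply cast_mul_n hn
    rw [← ZMod.natCast_eq_natCast_iff]
    push_cast
    rw [val_cast_self hr, val_cast_self hr, val_cast_self hr, add_comm]

lemma act_zero (hr : r ≠ 0) (p : (ZMod r → ℕ) × ZMod (n * r)) :
    subregAct n r 0 p = p := by
  haveI : NeZero r := ⟨hr⟩
  unfold subregAct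
  refine Prod.ext (funext fun i => ?_) ?_
  · simp
  · simp [ZMod.val_zero]

lemma sum_range_zmod {M : Type*} [AddCommMonoid M] [NeZero r] (f : ZMod r → M) :
    ∑ i ∈ Finset.range r, f (i : ZMod r) = ∑ i : ZMod r, f i := by
  refine Finset.sum_nbij' (fun i => (i : ZMod r)) (fun a => a.val) (by simp) (by simp [ZMod.val_lt])
    (fun a ha => ?_) (fun a _ => ?_) (fun a _ => rfl)
  · exact ZMod.val_natCast_of_lt (Finset.mem_range.mp ha)
  · show ((a.val : ℕ) : ZMod r) = a
    rw [ZMod.natCast_val, ZMod.cast_id]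


lemma cond_act (hn : n ≠ 0) (hr : r ≠ 0) (m : ZMod r)
    {p : (ZMod r → ℕ) × ZMod (n * r)} (hp : subregCond n r p) :
    subregCond n r (subregAct n r m p) := by
  haveI : NeZero r := ⟨hr⟩
  obtain ⟨h1, h2⟩ := hp
  have h1' : ∑ i : ZMod r, p.1 i = n := by rw [← sum_range_zmod]; exact h1
  constructor
  · show ∑ i ∈ Finset.range r, p.1 ((i : ZMod r) - m) = n
    rw [sum_range_zmod (f := fun i => p.1 (i - m))]
    exact (Fintype.sum_equiv (Equiv.subRight m) _ _ (fun i => rfl)).trans h1'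
  · show ZMod.castHom (dvd_mul_left r n) (ZMod r)
        (p.2 + (m.val : ZMod (n * r)) * (n : ZMod (n * r)))
      = ∑ i ∈ Finset.range r, (i : ZMod r) * ((p.1 ((i : ZMod r) - m) : ℕ) : ZMod r)
    rw [map_add, h2, map_mul, map_natCast, map_natCast, val_cast_self hr]
    rw [sum_range_zmod (f := fun i => i * (p.1 i : ZMod r))]
    rw [sum_range_zmod (f := fun i => i * ((p.1 (i - m) : ℕ) : ZMod r))]
    have : ∑ i : ZMod r, i * ((p.1 (i - m) : ℕ) : ZMod r)
        = ∑ i : ZMod r, (i + m) * ((p.1 i : ℕ) : ZMod r) := by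
      refine (Fintype.sum_equiv (Equiv.addRight m) _ _ (fun i => ?_)).symm
      simp [Equiv.coe_addRight, add_sub_cancel_right]
    rw [this]
    simp only [add_mul]
    rw [Finset.sum_add_distrib, ← Finset.mul_sum, ← Nat.cast_sum, h1']

lemma shift_val_lt (hn : n ≠ 0) (hr : r ≠ 0) {a : ZMod (n * r)} {m : ZMod r}
    (h1 : a.val < n) (h2 : (a + (m.val : ZMod (n * r)) * (n : ZMod (n * r))).val < n) :
    m = 0 := by
  haveI : NeZero r := ⟨hr⟩
  haveI : NeZero (n * r) := ⟨Nat.mul_ne_zero hn hr⟩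
  set c : ZMod (n * r) := (m.val : ZMod (n * r)) * (n : ZMod (n * r)) with hc
  have hcval : c = ((m.val * n : ℕ) : ZMod (n * r)) := by push_cast [hc]; ring
  have hmod : (a + c).val ≡ a.val + m.val * n [MOD n * r] := by
    rw [ZMod.val_add, hcval, ZMod.val_natCast]
    calc (a.val + m.val * n % (n * r)) % (n * r)
        ≡ a.val + m.val * n % (n * r) [MOD n * r] := Nat.mod_modEq _ _
      _ ≡ a.val + m.val * n [MOD n * r] := Nat.ModEq.add_left _ (Nat.mod_modEq _ _)
  have hmodn : (a + c).val ≡ a.val [MOD n] := by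
    have := hmod.of_dvd ⟨r, rfl⟩
    calc (a + c).val ≡ a.val + m.val * n [MOD n] := this
      _ ≡ a.val [MOD n] := by
          show (a.val + m.val * n) % n = a.val % n
          exact Nat.add_mul_mod_self_right _ _ _
  have hval : (a + c).val = a.val := by
    have := hmodn
    unfold Nat.ModEq at this
    rwa [Nat.mod_eq_of_lt h2, Nat.mod_eq_of_lt h1] at this
  have : a + c = a := ZMod.val_injective _ hval
  have hc0 : c = 0 := by
    have := congrArg (fun x => x - a) this
    simpa using this
  exact m_eq_zero hn hr (hc ▸ hc0)

/-- Canonicalizing shift. -/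
def mZero (n r : ℕ) (a : ZMod (n * r)) : ZMod r := -((a.val / n : ℕ) : ZMod r)

lemma canon_snd (hn : n ≠ 0) (hr : r ≠ 0) (a : ZMod (n * r)) :
    a + (((mZero n r a).val : ℕ) : ZMod (n * r)) * ((n : ℕ) : ZMod (n * r))
      = ((a.val % n : ℕ) : ZMod (n * r)) := by
  haveI : NeZero r := ⟨hr⟩
  haveI : NeZero (n * r) := ⟨Nat.mul_ne_zero hn hr⟩
  have hq' : r ∣ a.val / n + (mZero n r a).val := by
    have h0 : ((a.val / n + (mZero n r a).val : ℕ) : ZMod r) = 0 := by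
      push_cast
      rw [ZMod.natCast_val, ZMod.cast_id, mZero]
      ring
    exact (ZMod.natCast_eq_zero_iff _ _).mp h0
  obtain ⟨k, hk⟩ := hq'
  have key : a.val + (mZero n r a).val * n = a.val % n + (n * r) * k := by
    have h1 : n * (a.val / n) + a.val % n = a.val := Nat.div_add_mod _ _
    calc a.val + (mZero n r a).val * n
        = (n * (a.val / n) + a.val % n) + (mZero n r a).val * n := by rw [h1]
      _ = a.val % n + n * (a.val / n + (mZero n r a).val) := by ring
      _ = a.val % n + n * (r * k) := by rw [← hk]
      _ = a.val % n + (n * r) * k := by ring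
  have ha : ((a.val : ℕ) : ZMod (n * r)) = a := by rw [ZMod.natCast_val, ZMod.cast_id]
  calc a + (((mZero n r a).val : ℕ) : ZMod (n * r)) * ((n : ℕ) : ZMod (n * r))
      = ((a.val : ℕ) : ZMod (n * r)) + (((mZero n r a).val : ℕ) : ZMod (n * r)) * ((n : ℕ) : ZMod (n * r)) := by
        nth_rewrite 1 [← ha]; rfl
    _ = ((a.val + (mZero n r a).val * n : ℕ) : ZMod (n * r)) := by push_cast; ring
    _ = ((a.val % n + (n * r) * k : ℕ) : ZMod (n * r)) := by rw [key]
    _ = ((a.val % n : ℕ) : ZMod (n * r)) := by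
        rw [Nat.cast_add, Nat.cast_mul, ZMod.natCast_self, zero_mul, add_zero]

lemma canon_val_lt (hn : n ≠ 0) (hr : r ≠ 0) (a : ZMod (n * r)) :
    (a + (((mZero n r a).val : ℕ) : ZMod (n * r)) * ((n : ℕ) : ZMod (n * r))).val < n := by
  rw [canon_snd hn hr]
  rw [ZMod.val_natCast_of_lt]
  · exact Nat.mod_lt _ (Nat.pos_of_ne_zero hn)
  · calc a.val % n < n := Nat.mod_lt _ (Nat.pos_of_ne_zero hn)
      _ ≤ n * r := Nat.le_mul_of_pos_right n (Nat.pos_of_ne_zero hr)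

lemma uniq' (hn : n ≠ 0) (hr : r ≠ 0) {q q' : (ZMod r → ℕ) × ZMod (n * r)} {m : ZMod r}
    (h : subregAct n r m q = q') (h1 : q.2.val < n) (h2 : q'.2.val < n) :
    m = 0 ∧ q = q' := by
  have hs : (subregAct n r m q).2.val < n := by rw [h]; exact h2
  have hm : m = 0 := shift_val_lt hn hr h1 hs
  refine ⟨hm, ?_⟩
  rw [← h, hm, act_zero hr]


/-- The set of canonical representatives. -/
def TSet (n r : ℕ) : Type :=
  {p : (ZMod r → ℕ) × ZMod (n * r) // subregCond n r p ∧ p.2.val < n}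

lemma castHom_eq (hn : n ≠ 0) (hr : r ≠ 0) (a : ZMod (n * r)) :
    ZMod.castHom (dvd_mul_left r n) (ZMod r) a = ((a.val : ℕ) : ZMod r) := by
  haveI : NeZero (n * r) := ⟨Nat.mul_ne_zero hn hr⟩
  rw [ZMod.castHom_apply, ZMod.natCast_val]

/-- Canonicalization map. -/
def canonT (hn : n ≠ 0) (hr : r ≠ 0) (x : {p // subregCond n r p}) : TSet n r :=
  ⟨subregAct n r (mZero n r x.1.2) x.1,
    cond_act hn hr _ x.2, canon_val_lt hn hr x.1.2⟩

lemma canonT_eq (hn : n ≠ 0) (hr : r ≠ 0) (x : {p // subregCond n r p}) :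
    (canonT hn hr x).1 = subregAct n r (mZero n r x.1.2) x.1 := rfl

/-- Second structural equivalence: `X ≃ ZMod r × T`. -/
noncomputable def equiv2 (hn : n ≠ 0) (hr : r ≠ 0) :
    {p // subregCond n r p} ≃ ZMod r × TSet n r where
  toFun x := (-(mZero n r x.1.2), canonT hn hr x)
  invFun mt := ⟨subregAct n r mt.1 mt.2.1, cond_act hn hr _ mt.2.2.1⟩
  left_inv x := by
    apply Subtype.ext
    show subregAct n r (-(mZero n r x.1.2)) (subregAct n r (mZero n r x.1.2) x.1) = x.1
    rw [act_act hn hr, neg_add_cancel, act_zero hr]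
  right_inv mt := by
    obtain ⟨m, t⟩ := mt
    have hcomp : subregAct n r (mZero n r (subregAct n r m t.1).2 + m) t.1
        = (canonT hn hr ⟨subregAct n r m t.1, cond_act hn hr _ t.2.1⟩).1 := by
      rw [canonT_eq, act_act hn hr]
    have h2 : (subregAct n r (mZero n r (subregAct n r m t.1).2 + m) t.1).2.val < n := by
      rw [hcomp]
      exact (canonT hn hr _).2.2
    obtain ⟨hm0, heq⟩ := uniq' hn hr (rfl :
      subregAct n r (mZero n r (subregAct n r m t.1).2 + m) t.1 = _) t.2.2 h2
    refine Prod.ext ?_ ?_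
    · show -(mZero n r (subregAct n r m t.1).2) = m
      have := neg_eq_of_add_eq_zero_left hm0
      rw [← this, neg_neg]
    · show canonT hn hr ⟨subregAct n r m t.1, cond_act hn hr _ t.2.1⟩ = t
      apply Subtype.ext
      rw [← hcomp, ← heq]

/-- Third structural equivalence: the orbit space is `T`. -/
noncomputable def equiv3 (hn : n ≠ 0) (hr : r ≠ 0) :
    Quot (fun (x y : {p // subregCond n r p}) =>
      ∃ m : ZMod r, subregAct n r m x.1 = y.1) ≃ TSet n r where
  toFun := Quot.lift (canonT hn hr) (by
    rintro x y ⟨m, hm⟩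
    have hxy : subregAct n r (mZero n r y.1.2 + m - mZero n r x.1.2) (canonT hn hr x).1
        = (canonT hn hr y).1 := by
      rw [canonT_eq, canonT_eq, act_act hn hr, sub_add_cancel, ← hm, act_act hn hr]
    obtain ⟨_, heq⟩ := uniq' hn hr hxy (canonT hn hr x).2.2 (canonT hn hr y).2.2
    exact Subtype.ext heq)
  invFun t := Quot.mk _ ⟨t.1, t.2.1⟩
  left_inv := by
    apply Quot.ind
    intro x
    apply Quot.sound
    exact ⟨-(mZero n r x.1.2), by
      show subregAct n r (-(mZero n r x.1.2)) (subregAct n r (mZero n r x.1.2) x.1) = x.1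
      rw [act_act hn hr, neg_add_cancel, act_zero hr]⟩
  right_inv t := by
    obtain ⟨hm0, heq⟩ := uniq' hn hr (rfl :
      subregAct n r (mZero n r t.1.2) t.1 = _) t.2.2 (canon_val_lt hn hr t.1.2)
    exact Subtype.ext heq.symm

/-- The weight of `λ`. -/
def wgt (r : ℕ) (f : ZMod r → ℕ) : ZMod r :=
  ∑ i ∈ Finset.range r, (i : ZMod r) * ((f (i : ZMod r) : ℕ) : ZMod r)

/-- First structural equivalence: `X ≃ Λ × ZMod n`. -/
noncomputable def equiv1 (hn : n ≠ 0) (hr : r ≠ 0) :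
    {p // subregCond n r p} ≃
      {f : ZMod r → ℕ // ∑ i ∈ Finset.range r, f (i : ZMod r) = n} × ZMod n where
  toFun x := (⟨x.1.1, x.2.1⟩, ((x.1.2.val / r : ℕ) : ZMod n))
  invFun lk := ⟨(lk.1.1, (((wgt r lk.1.1).val + lk.2.val * r : ℕ) : ZMod (n * r))),
    lk.1.2, by
      haveI : NeZero r := ⟨hr⟩
      rw [map_natCast]
      push_cast
      rw [ZMod.natCast_val, ZMod.cast_id, ZMod.natCast_self, mul_zero, add_zero]
      rfl⟩
  left_inv x := by
    haveI : NeZero r := ⟨hr⟩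
    haveI : NeZero n := ⟨hn⟩
    haveI : NeZero (n * r) := ⟨Nat.mul_ne_zero hn hr⟩
    apply Subtype.ext
    refine Prod.ext rfl ?_
    show (((wgt r x.1.1).val + ((x.1.2.val / r : ℕ) : ZMod n).val * r : ℕ) : ZMod (n * r))
      = x.1.2
    have hw0 : wgt r x.1.1 = ZMod.castHom (dvd_mul_left r n) (ZMod r) x.1.2 := x.2.2.symm
    have hw : (wgt r x.1.1).val = x.1.2.val % r := by
      rw [hw0, castHom_eq hn hr, ZMod.val_natCast]
    have hdiv : x.1.2.val / r < n := by
      rw [Nat.div_lt_iff_lt_mul (Nat.pos_of_ne_zero hr)]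
      exact ZMod.val_lt x.1.2
    rw [hw, ZMod.val_natCast_of_lt hdiv, Nat.mod_add_div', ZMod.natCast_val, ZMod.cast_id]
  right_inv lk := by
    obtain ⟨l, k⟩ := lk
    haveI : NeZero r := ⟨hr⟩
    haveI : NeZero n := ⟨hn⟩
    haveI : NeZero (n * r) := ⟨Nat.mul_ne_zero hn hr⟩
    have hlt : (wgt r l.1).val + k.val * r < n * r := by
      have h1 : (wgt r l.1).val < r := ZMod.val_lt _
      have h2 : k.val < n := ZMod.val_lt _
      calc (wgt r l.1).val + k.val * r < r + k.val * r := by omega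
        _ = (k.val + 1) * r := by ring
        _ ≤ n * r := Nat.mul_le_mul_right r (by omega)
    have haval : (((wgt r l.1).val + k.val * r : ℕ) : ZMod (n * r)).val
        = (wgt r l.1).val + k.val * r := ZMod.val_natCast_of_lt hlt
    refine Prod.ext (Subtype.ext rfl) ?_
    show (((((wgt r l.1).val + k.val * r : ℕ) : ZMod (n * r)).val / r : ℕ) : ZMod n) = k
    rw [haval, Nat.add_mul_div_right _ _ (Nat.pos_of_ne_zero hr),
      Nat.div_eq_of_lt (ZMod.val_lt _), zero_add, ZMod.natCast_val, ZMod.cast_id]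


lemma card_lam (hn : n ≠ 0) (hr : r ≠ 0) :
    Nat.card {f : ZMod r → ℕ // ∑ i ∈ Finset.range r, f (i : ZMod r) = n}
      = (r + n - 1).choose n := by
  haveI : NeZero r := ⟨hr⟩
  have eL : {f : ZMod r → ℕ // ∑ i ∈ Finset.range r, f (i : ZMod r) = n}
      ≃ Sym (ZMod r) n :=
    (Equiv.subtypeEquivRight fun f => by rw [sum_range_zmod]).trans
      (Sym.equivNatSumOfFintype (ZMod r) n).symm
  rw [Nat.card_congr eL, Nat.card_eq_fintype_card, Sym.card_sym_eq_choose, ZMod.card]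

lemma card_TSet (hn : 2 ≤ n) (hr : 1 ≤ r) :
    Nat.card (TSet n r) = (n + r - 1).choose (n - 1) := by
  have hn' : n ≠ 0 := by omega
  have hr' : r ≠ 0 := by omega
  have cX1 : Nat.card {p // subregCond n r p} = (r + n - 1).choose n * n := by
    rw [Nat.card_congr (equiv1 hn' hr'), Nat.card_prod, card_lam hn' hr', Nat.card_zmod]
  have cX2 : Nat.card {p // subregCond n r p} = r * Nat.card (TSet n r) := by
    rw [Nat.card_congr (equiv2 hn' hr'), Nat.card_prod, Nat.card_zmod]
  have hrn : r + n - 1 = n + r - 1 := by omega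
  have hsucc : n - 1 + 1 = n := by omega
  have hid : (n + r - 1).choose n * n = (n + r - 1).choose (n - 1) * r := by
    have := Nat.choose_succ_right_eq (n + r - 1) (n - 1)
    rw [hsucc] at this
    have hsub : n + r - 1 - (n - 1) = r := by omega
    rw [hsub] at this
    exact this
  rw [hrn, hid] at cX1
  rw [cX1, Nat.mul_comm] at cX2
  exact Nat.eq_of_mul_eq_mul_left (Nat.pos_of_ne_zero hr') cX2.symm

end SubregAux

/-- **Classification count for the rational subregular W-algebra `W_sb(n,r)`.**
The `ZMod r`-action on the parameter set is free and the number of orbits is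
`C(n + r − 1, n − 1)`. -/
theorem stmt_11 (n r : ℕ) (hn : 2 ≤ n) (hr : 1 ≤ r) :
    (∀ (m : ZMod r) (p : (ZMod r → ℕ) × ZMod (n * r)),
      subregCond n r p → subregAct n r m p = p → m = 0) ∧
    Nat.card (Quot (fun (x y : {p // subregCond n r p}) =>
      ∃ m : ZMod r, subregAct n r m x.1 = y.1)) = (n + r - 1).choose (n - 1) := by
  have hn' : n ≠ 0 := by omega
  have hr' : r ≠ 0 := by omega
  constructor
  · intro m p _ h
    have h2 : p.2 + (m.val : ZMod (n * r)) * ((n : ℕ) : ZMod (n * r)) = p.2 :=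
      congrArg Prod.snd h
    have h0 : (m.val : ZMod (n * r)) * ((n : ℕ) : ZMod (n * r)) = 0 :=
      add_eq_left.mp h2
    exact SubregAux.m_eq_zero hn' hr' h0
  · rw [Nat.card_congr (SubregAux.equiv3 hn' hr')]
    exact SubregAux.card_TSet hn hr
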